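/- (Equation (3.64)/(3.60).) For every μ₁ ∈ [0,1], with μ₂ := 1−μ₁: ∫_{ℝ²}∫_{ℝ²} (Σψ_in)(q₁,q₂)·ψ_in(q₁,q₂) dq₁ dq₂ = L(μ₁,μ₂). -/

import Mathlib

open MeasureTheory Real Set intervalIntegral
open scoped RealInnerProductSpace

noncomputable abbrev R2 : Type := EuclideanSpace ℝ (Fin 2)

/-- The modified Bessel function of order zero. -/
noncomputable def I0 (x : ℝ) : ℝ :=
  (1 / Real.pi) * ∫ θ in (0:ℝ)..Real.pi, Real.exp (x * Real.cos θ)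

/-- The function `L(μ₁,μ₂)` of (3.65b). -/
noncomputable def Lfun (μ₁ μ₂ : ℝ) : ℝ :=
  ∫ l in Set.Ioi (0:ℝ), ∫ r in Set.Ioi (0:ℝ),
    Real.exp (-2 * l) * Real.exp (-(μ₁ ^ 2 + μ₂ ^ 2) * r) *
      (I0 (|μ₁ - μ₂| * Real.sqrt (l * r))) ^ 2

/-- The unit vector `(cos θ, sin θ)` in `ℝ²`. -/
noncomputable def unitVec (θ : ℝ) : R2 :=
  (WithLp.equiv 2 (Fin 2 → ℝ)).symm ![Real.cos θ, Real.sin θ]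

/-- The Gaussian `ψ(q) = π^{-1/2} e^{-|q|²/2}`. -/
noncomputable def psi (q : R2) : ℝ := (1 / Real.sqrt Real.pi) * Real.exp (-‖q‖ ^ 2 / 2)

/-- The angular average `(Σψ_in)(q₁,q₂)`, with `q_cm = q₁+q₂` and `q = μ₂q₁-μ₁q₂`. -/
noncomputable def SigmaPsi (μ₁ : ℝ) (q₁ q₂ : R2) : ℝ :=
  (1 / (2 * Real.pi)) * ∫ θ in (0:ℝ)..(2 * Real.pi),
    psi (μ₁ • (q₁ + q₂) + ‖(1 - μ₁) • q₁ - μ₁ • q₂‖ • unitVec θ) *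
      psi ((1 - μ₁) • (q₁ + q₂) - ‖(1 - μ₁) • q₁ - μ₁ • q₂‖ • unitVec θ)

/-! ### Basic facts about `I0` -/

lemma continuous_I0 : Continuous I0 := by
  apply Continuous.mul continuous_const
  exact continuous_parametric_intervalIntegral_of_continuous' (by fun_prop) _ _

lemma I0_nonneg (x : ℝ) : 0 ≤ I0 x := by
  have := Real.pi_pos
  apply mul_nonneg (by positivity)
  apply intervalIntegral.integral_nonneg (le_of_lt this)
  intro θ _; positivity

lemma I0_le_exp (x : ℝ) (hx : 0 ≤ x) : I0 x ≤ Real.exp x := by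
  have hπ := Real.pi_pos
  have h : ∫ θ in (0:ℝ)..Real.pi, Real.exp (x * Real.cos θ) ≤
      ∫ θ in (0:ℝ)..Real.pi, Real.exp x := by
    apply intervalIntegral.integral_mono_on (le_of_lt hπ)
    · exact (Continuous.intervalIntegrable (by fun_prop) _ _)
    · exact intervalIntegrable_const
    · intro θ _
      exact Real.exp_le_exp.2 (by nlinarith [Real.cos_le_one θ, Real.neg_one_le_cos θ])
  rw [I0]
  rw [intervalIntegral.integral_const] at h
  calc (1/Real.pi) * ∫ θ in (0:ℝ)..Real.pi, Real.exp (x * Real.cos θ)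
      ≤ (1/Real.pi) * ((Real.pi - 0) • Real.exp x) := by
        apply mul_le_mul_of_nonneg_left h (by positivity)
    _ = Real.exp x := by field_simp; simp

/-! ### The angular integral -/

lemma int_exp_cos (r : ℝ) :
    ∫ θ in (-Real.pi)..Real.pi, Real.exp (r * Real.cos θ) = 2 * Real.pi * I0 r := by
  have hπ := Real.pi_pos
  have hcont : ∀ a b : ℝ, IntervalIntegrable (fun θ => Real.exp (r * Real.cos θ)) volume a b :=
    fun a b => Continuous.intervalIntegrable (by fun_prop) a b
  have hsplit : ∫ θ in (-Real.pi)..Real.pi, Real.exp (r * Real.cos θ)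
      = (∫ θ in (-Real.pi)..(0:ℝ), Real.exp (r * Real.cos θ))
        + ∫ θ in (0:ℝ)..Real.pi, Real.exp (r * Real.cos θ) :=
    (intervalIntegral.integral_add_adjacent_intervals (hcont _ _) (hcont _ _)).symm
  have hneg : ∫ θ in (-Real.pi)..(0:ℝ), Real.exp (r * Real.cos θ)
      = ∫ θ in (0:ℝ)..Real.pi, Real.exp (r * Real.cos θ) := by
    have := intervalIntegral.integral_comp_neg (a := (0:ℝ)) (b := Real.pi)
      (fun θ => Real.exp (r * Real.cos θ))
    simp only [Real.cos_neg] at this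
    rw [this]
    norm_num
  rw [hsplit, hneg, I0]
  have : Real.pi ≠ 0 := ne_of_gt hπ
  field_simp
  ring

lemma ang_pi (a b : ℝ) :
    ∫ θ in (-Real.pi)..Real.pi, Real.exp (a * Real.cos θ + b * Real.sin θ)
      = 2 * Real.pi * I0 (Real.sqrt (a ^ 2 + b ^ 2)) := by
  rcases eq_or_ne (a^2 + b^2) 0 with h0 | hne
  · have ha : a = 0 := by nlinarith [sq_nonneg a, sq_nonneg b]
    have hb : b = 0 := by nlinarith [sq_nonneg a, sq_nonneg b]
    subst ha; subst hb
    simpa using int_exp_cos 0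
  · set r : ℝ := Real.sqrt (a ^ 2 + b ^ 2) with hr
    have hrpos : 0 < r := Real.sqrt_pos.2 (lt_of_le_of_ne (by positivity) (Ne.symm hne))
    set z : ℂ := ⟨a, b⟩ with hz
    have hzne : z ≠ 0 := by
      intro h
      apply hne
      have ha : a = 0 := congrArg Complex.re h
      have hb : b = 0 := congrArg Complex.im h
      simp [ha, hb]
    have habs : ‖z‖ = r := by
      rw [Complex.norm_def, Complex.normSq_mk]
      rw [hr]; ring_nf
    set φ := Complex.arg z with hφ
    have hcos : Real.cos φ = a / r := by rw [hφ, Complex.cos_arg hzne, habs]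
    have hsin : Real.sin φ = b / r := by rw [hφ, Complex.sin_arg, habs]
    have key : ∀ θ : ℝ, a * Real.cos θ + b * Real.sin θ = r * Real.cos (θ - φ) := by
      intro θ
      rw [Real.cos_sub, hcos, hsin]
      field_simp
    calc ∫ θ in (-Real.pi)..Real.pi, Real.exp (a * Real.cos θ + b * Real.sin θ)
        = ∫ θ in (-Real.pi)..Real.pi, Real.exp (r * Real.cos (θ - φ)) := by
          congr 1; funext θ; rw [key θ]
      _ = ∫ θ in (-Real.pi - φ)..(Real.pi - φ), Real.exp (r * Real.cos θ) := by
          exact intervalIntegral.integral_comp_sub_right (fun θ => Real.exp (r * Real.cos θ)) φ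
      _ = ∫ θ in (-Real.pi)..Real.pi, Real.exp (r * Real.cos θ) := by
          have hper : Function.Periodic (fun θ => Real.exp (r * Real.cos θ)) (2 * Real.pi) := by
            intro θ; simp [Real.cos_add_two_pi]
          have := hper.intervalIntegral_add_eq (-Real.pi - φ) (-Real.pi)
          have he1 : -Real.pi - φ + 2 * Real.pi = Real.pi - φ := by ring
          have he2 : -Real.pi + 2 * Real.pi = Real.pi := by ring
          rw [he1, he2] at this
          exact this
      _ = 2 * Real.pi * I0 r := int_exp_cos r

lemma ang_two_pi (a b : ℝ) :
    ∫ θ in (0:ℝ)..(2 * Real.pi), Real.exp (a * Real.cos θ + b * Real.sin θ)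
      = 2 * Real.pi * I0 (Real.sqrt (a ^ 2 + b ^ 2)) := by
  have hper : Function.Periodic (fun θ => Real.exp (a * Real.cos θ + b * Real.sin θ))
      (2 * Real.pi) := by
    intro θ; simp [Real.cos_add_two_pi, Real.sin_add_two_pi]
  have := hper.intervalIntegral_add_eq (0:ℝ) (-Real.pi)
  rw [zero_add, show -Real.pi + 2 * Real.pi = Real.pi by ring] at this
  rw [this]
  exact ang_pi a b

/-! ### Coordinates on `R2` -/

lemma unitVec_apply_zero (θ : ℝ) : unitVec θ 0 = Real.cos θ := rfl
lemma unitVec_apply_one (θ : ℝ) : unitVec θ 1 = Real.sin θ := rfl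

lemma norm_unitVec (θ : ℝ) : ‖unitVec θ‖ = 1 := by
  rw [EuclideanSpace.norm_eq, Fin.sum_univ_two]
  rw [show ‖unitVec θ 0‖ ^ 2 + ‖unitVec θ 1‖ ^ 2 = Real.cos θ ^ 2 + Real.sin θ ^ 2 by
      rw [unitVec_apply_zero, unitVec_apply_one, Real.norm_eq_abs, Real.norm_eq_abs,
        sq_abs, sq_abs]]
  rw [Real.cos_sq_add_sin_sq, Real.sqrt_one]

lemma inner_unitVec (Q : R2) (θ : ℝ) :
    ⟪Q, unitVec θ⟫ = Q 0 * Real.cos θ + Q 1 * Real.sin θ := by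
  rw [PiLp.inner_apply]
  simp [Fin.sum_univ_two, unitVec_apply_zero, unitVec_apply_one]
  ring

lemma norm_eq_sqrt (Q : R2) : ‖Q‖ = Real.sqrt (Q 0 ^ 2 + Q 1 ^ 2) := by
  rw [EuclideanSpace.norm_eq]
  simp [Fin.sum_univ_two, sq_abs]

/-! ### Closed form for `SigmaPsi` -/

lemma sigmaPsi_eq (μ₁ : ℝ) (q₁ q₂ : R2) :
    SigmaPsi μ₁ q₁ q₂ = (1 / Real.pi) *
      Real.exp (-(((μ₁ ^ 2 + (1 - μ₁) ^ 2) * ‖q₁ + q₂‖ ^ 2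
          + 2 * ‖(1 - μ₁) • q₁ - μ₁ • q₂‖ ^ 2) / 2)) *
        I0 (|μ₁ - (1 - μ₁)| * (‖(1 - μ₁) • q₁ - μ₁ • q₂‖ * ‖q₁ + q₂‖)) := by
  have hπ := Real.pi_pos
  set Q := q₁ + q₂ with hQ
  set c := ‖(1 - μ₁) • q₁ - μ₁ • q₂‖ with hc
  have hc0 : 0 ≤ c := norm_nonneg _
  set Δ := μ₁ - (1 - μ₁) with hΔ
  set K := ((μ₁ ^ 2 + (1 - μ₁) ^ 2) * ‖Q‖ ^ 2 + 2 * c ^ 2) / 2 with hK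
  have key : ∀ θ : ℝ,
      psi (μ₁ • Q + c • unitVec θ) * psi ((1 - μ₁) • Q - c • unitVec θ)
        = (1 / Real.pi) * Real.exp (-K) *
          Real.exp ((-(Δ * c * Q 0)) * Real.cos θ + (-(Δ * c * Q 1)) * Real.sin θ) := by
    intro θ
    have h1 : ‖μ₁ • Q + c • unitVec θ‖ ^ 2
        = μ₁ ^ 2 * ‖Q‖ ^ 2 + 2 * (μ₁ * c * ⟪Q, unitVec θ⟫) + c ^ 2 := by
      rw [norm_add_sq_real]
      rw [real_inner_smul_left, real_inner_smul_right, norm_smul, norm_smul]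
      rw [norm_unitVec]
      simp [mul_pow, sq_abs]
      ring
    have h2 : ‖(1 - μ₁) • Q - c • unitVec θ‖ ^ 2
        = (1 - μ₁) ^ 2 * ‖Q‖ ^ 2 - 2 * ((1 - μ₁) * c * ⟪Q, unitVec θ⟫) + c ^ 2 := by
      rw [norm_sub_sq_real]
      rw [real_inner_smul_left, real_inner_smul_right, norm_smul, norm_smul]
      rw [norm_unitVec]
      simp [mul_pow, sq_abs]
      ring
    rw [psi, psi]
    rw [show (1 / Real.sqrt Real.pi) * Real.exp (-‖μ₁ • Q + c • unitVec θ‖ ^ 2 / 2) *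
        ((1 / Real.sqrt Real.pi) * Real.exp (-‖(1 - μ₁) • Q - c • unitVec θ‖ ^ 2 / 2))
        = (1 / Real.pi) * Real.exp (-‖μ₁ • Q + c • unitVec θ‖ ^ 2 / 2
            + -‖(1 - μ₁) • Q - c • unitVec θ‖ ^ 2 / 2) by
      rw [Real.exp_add]
      rw [show (1:ℝ) / Real.pi = (1 / Real.sqrt Real.pi) * (1 / Real.sqrt Real.pi) by
        rw [div_mul_div_comm, Real.mul_self_sqrt (le_of_lt hπ)]; norm_num]
      ring]
    rw [mul_assoc, ← Real.exp_add]
    congr 2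
    rw [h1, h2, inner_unitVec, hK, hΔ]
    ring
  rw [SigmaPsi]
  rw [intervalIntegral.integral_congr (g := fun θ => (1 / Real.pi) * Real.exp (-K) *
      Real.exp ((-(Δ * c * Q 0)) * Real.cos θ + (-(Δ * c * Q 1)) * Real.sin θ))
      (fun θ _ => key θ)]
  rw [intervalIntegral.integral_const_mul, ang_two_pi]
  have hsq : Real.sqrt ((-(Δ * c * Q 0)) ^ 2 + (-(Δ * c * Q 1)) ^ 2)
      = |Δ| * (c * ‖Q‖) := by
    rw [show (-(Δ * c * Q 0)) ^ 2 + (-(Δ * c * Q 1)) ^ 2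
        = (Δ ^ 2 * c ^ 2) * (Q 0 ^ 2 + Q 1 ^ 2) by ring]
    rw [Real.sqrt_mul (by positivity), norm_eq_sqrt]
    rw [show Δ ^ 2 * c ^ 2 = (|Δ| * c) ^ 2 by rw [mul_pow, sq_abs]]
    rw [Real.sqrt_sq (by positivity)]
    ring
  rw [hsq]
  field_simp

/-! ### The change of variables -/

/-- CoM change of variables as a homeomorphism. -/
noncomputable def Thom (μ₁ : ℝ) : (R2 × R2) ≃ₜ (R2 × R2) where
  toFun p := (p.1 + p.2, (1 - μ₁) • p.1 - μ₁ • p.2)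
  invFun p := (μ₁ • p.1 + p.2, (1 - μ₁) • p.1 - p.2)
  left_inv p := by
    ext1 <;> simp only <;> module
  right_inv p := by
    ext1 <;> simp only <;> module
  continuous_toFun := by fun_prop
  continuous_invFun := by fun_prop

noncomputable def Tmeq (μ₁ : ℝ) : (R2 × R2) ≃ᵐ (R2 × R2) := (Thom μ₁).toMeasurableEquiv

lemma Tmeq_apply (μ₁ : ℝ) (p : R2 × R2) :
    Tmeq μ₁ p = (p.1 + p.2, (1 - μ₁) • p.1 - μ₁ • p.2) := rfl

lemma Tmeq_measurePreserving (μ₁ : ℝ) :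
    MeasurePreserving (Tmeq μ₁) (volume : Measure (R2 × R2)) volume := by
  have h1 : MeasurePreserving (fun p : R2 × R2 => Prod.swap p) volume volume := by
    rw [Measure.volume_eq_prod]
    exact Measure.measurePreserving_swap
  have h2 : MeasurePreserving (fun p : R2 × R2 => (p.1, p.1 + p.2)) volume volume := by
    rw [Measure.volume_eq_prod]
    exact MeasurePreserving.skew_product (MeasurePreserving.id _)
      (by fun_prop) (Filter.Eventually.of_forall fun a => map_add_left_eq_self volume a)
  have h3 : MeasurePreserving (fun p : R2 × R2 => (p.1, p.2 - μ₁ • p.1)) volume volume := by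
    rw [Measure.volume_eq_prod]
    exact MeasurePreserving.skew_product (MeasurePreserving.id _)
      (by fun_prop)
      (Filter.Eventually.of_forall fun a => map_add_right_eq_self volume (-(μ₁ • a)))
  have hcomp := (h3.comp h1).comp h2
  have heq : ((fun p : R2 × R2 => (p.1, p.2 - μ₁ • p.1)) ∘
      (fun p : R2 × R2 => Prod.swap p) ∘ (fun p : R2 × R2 => (p.1, p.1 + p.2)))
      = fun p : R2 × R2 => (p.1 + p.2, (1 - μ₁) • p.1 - μ₁ • p.2) := by
    funext p
    simp only [Function.comp_apply, Prod.swap_prod_mk]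
    ext1
    · rfl
    · simp only
      module
  have : MeasurePreserving
      (fun p : R2 × R2 => (p.1 + p.2, (1 - μ₁) • p.1 - μ₁ • p.2)) volume volume := by
    rw [← heq]
    exact hcomp
  exact this

/-! ### Polar coordinates -/

noncomputable def eps : R2 ≃ᵐ (ℝ × ℝ) :=
  (MeasurableEquiv.toLp 2 (Fin 2 → ℝ)).symm.trans (MeasurableEquiv.finTwoArrow)

lemma eps_measurePreserving : MeasurePreserving eps (volume : Measure R2) volume :=
  (volume_preserving_finTwoArrow ℝ).comp
    (EuclideanSpace.volume_preserving_symm_measurableEquiv_toLp (Fin 2))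

lemma eps_symm_apply_zero (p : ℝ × ℝ) : eps.symm p 0 = p.1 := rfl
lemma eps_symm_apply_one (p : ℝ × ℝ) : eps.symm p 1 = p.2 := rfl

lemma norm_eps_symm (p : ℝ × ℝ) : ‖eps.symm p‖ = Real.sqrt (p.1 ^ 2 + p.2 ^ 2) := by
  rw [norm_eq_sqrt, eps_symm_apply_zero, eps_symm_apply_one]

lemma inner_eps_symm (v : R2) (p : ℝ × ℝ) :
    ⟪v, eps.symm p⟫ = v 0 * p.1 + v 1 * p.2 := by
  rw [PiLp.inner_apply]
  simp [Fin.sum_univ_two, eps_symm_apply_zero, eps_symm_apply_one]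
  ring

/-- Polar coordinates formula for integrals of `f ‖x‖ * exp ⟪v, x⟫` on `R2`. -/
lemma polar_int (f : ℝ → ℝ) (v : R2)
    (hint : IntegrableOn (fun p : ℝ × ℝ =>
        p.1 * (f p.1 * Real.exp ((v 0 * p.1) * Real.cos p.2 + (v 1 * p.1) * Real.sin p.2)))
      polarCoord.target) :
    ∫ x : R2, f ‖x‖ * Real.exp ⟪v, x⟫ =
      (2 * Real.pi) * ∫ r in Set.Ioi (0:ℝ), r * (f r * I0 (‖v‖ * r)) := by
  have hπ := Real.pi_pos
  have h1 : ∫ x : R2, f ‖x‖ * Real.exp ⟪v, x⟫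
      = ∫ p : ℝ × ℝ, f ‖eps.symm p‖ * Real.exp ⟪v, eps.symm p⟫ :=
    ((eps_measurePreserving.symm eps).integral_comp eps.symm.measurableEmbedding
      (fun x : R2 => f ‖x‖ * Real.exp ⟪v, x⟫)).symm
  rw [h1, ← integral_comp_polarCoord_symm
    (fun p : ℝ × ℝ => f ‖eps.symm p‖ * Real.exp ⟪v, eps.symm p⟫)]
  have h2 : ∀ p ∈ polarCoord.target,
      p.1 • (f ‖eps.symm (polarCoord.symm p)‖ * Real.exp ⟪v, eps.symm (polarCoord.symm p)⟫)
      = p.1 * (f p.1 * Real.exp ((v 0 * p.1) * Real.cos p.2 + (v 1 * p.1) * Real.sin p.2)) := by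
    rintro ⟨r, θ⟩ hp
    rw [polarCoord_target] at hp
    obtain ⟨hr, hθ⟩ := hp
    simp only [mem_Ioi] at hr
    have hsymm : polarCoord.symm (r, θ) = (r * Real.cos θ, r * Real.sin θ) := rfl
    rw [hsymm, smul_eq_mul, norm_eps_symm, inner_eps_symm]
    have : Real.sqrt ((r * Real.cos θ) ^ 2 + (r * Real.sin θ) ^ 2) = r := by
      rw [show (r * Real.cos θ) ^ 2 + (r * Real.sin θ) ^ 2
          = r ^ 2 * (Real.sin θ ^ 2 + Real.cos θ ^ 2) by ring, Real.sin_sq_add_cos_sq,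
        mul_one, Real.sqrt_sq hr.le]
    rw [this]
    ring_nf
  rw [setIntegral_congr_fun (polarCoord.open_target.measurableSet) h2]
  rw [polarCoord_target] at hint ⊢
  rw [Measure.volume_eq_prod, setIntegral_prod _ hint]
  rw [← MeasureTheory.integral_const_mul]
  apply setIntegral_congr_fun measurableSet_Ioi
  intro r hr
  simp only [mem_Ioi] at hr
  have inner_eq : ∫ θ in Ioo (-Real.pi) Real.pi,
      r * (f r * Real.exp ((v 0 * r) * Real.cos θ + (v 1 * r) * Real.sin θ))
      = r * f r * ∫ θ in (-Real.pi)..Real.pi,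
          Real.exp ((v 0 * r) * Real.cos θ + (v 1 * r) * Real.sin θ) := by
    rw [intervalIntegral.integral_of_le (by linarith), integral_Ioc_eq_integral_Ioo]
    rw [← MeasureTheory.integral_const_mul]
    congr 1
    funext θ
    ring
  show (∫ θ in Ioo (-Real.pi) Real.pi,
      r * (f r * Real.exp ((v 0 * r) * Real.cos θ + (v 1 * r) * Real.sin θ))) = _
  rw [inner_eq, ang_pi]
  have hsq : Real.sqrt ((v 0 * r) ^ 2 + (v 1 * r) ^ 2) = ‖v‖ * r := by
    rw [show (v 0 * r) ^ 2 + (v 1 * r) ^ 2 = (v 0 ^ 2 + v 1 ^ 2) * r ^ 2 by ring,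
      Real.sqrt_mul (by positivity), Real.sqrt_sq hr.le, norm_eq_sqrt]
  rw [hsq]
  ring

/-! ### Radial integration and substitution -/

/-- substitution `ρ = s²` -/
lemma subst_sq (φ : ℝ → ℝ) :
    ∫ s in Set.Ioi (0:ℝ), s * φ (s ^ 2) = (1 / 2) * ∫ ρ in Set.Ioi (0:ℝ), φ ρ := by
  have h := integral_comp_rpow_Ioi φ (p := 2) two_ne_zero
  rw [← h, ← MeasureTheory.integral_const_mul]
  apply setIntegral_congr_fun measurableSet_Ioi
  intro x hx
  simp only [mem_Ioi] at hx
  have h2 : x ^ (2:ℝ) = x ^ 2 := by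
    rw [show (2:ℝ) = ((2:ℕ):ℝ) by norm_num, Real.rpow_natCast]
  have h1 : x ^ ((2:ℝ) - 1) = x := by
    norm_num
  show x * φ (x ^ 2) = 1 / 2 * ((|2| * x ^ ((2:ℝ) - 1)) • φ (x ^ (2:ℝ)))
  rw [smul_eq_mul, h1, h2, abs_two]
  ring

/-- radial integration on R2 -/
lemma radial_int (f : ℝ → ℝ) :
    ∫ x : R2, f ‖x‖ = (2 * Real.pi) * ∫ r in Set.Ioi (0:ℝ), r * f r := by
  have h := integral_fun_norm_addHaar (volume : Measure R2) f
  rw [h]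
  have hdim : Module.finrank ℝ R2 = 2 := finrank_euclideanSpace_fin
  rw [hdim]
  have hball : volume.real (Metric.ball (0:R2) 1) = Real.pi := by
    rw [measureReal_def]
    rw [EuclideanSpace.volume_ball]
    simp only [Fintype.card_fin]
    rw [show ((2:ℕ):ℝ) / 2 + 1 = 2 by norm_num]
    rw [Real.Gamma_two]
    rw [ENNReal.ofReal_one, one_pow, one_mul, ENNReal.toReal_ofReal (by positivity)]
    rw [Real.sq_sqrt Real.pi_pos.le]
    norm_num
  rw [hball, nsmul_eq_mul, smul_eq_mul]
  rw [show ((2:ℕ):ℝ) * (Real.pi * ∫ y in Set.Ioi (0:ℝ), y ^ (2-1) • f y)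
      = 2 * Real.pi * ∫ y in Set.Ioi (0:ℝ), y ^ (2-1) • f y by push_cast; ring]
  congr 1
  apply setIntegral_congr_fun measurableSet_Ioi
  intro r hr
  simp

/-! ### Integrability -/

lemma integrable_gauss (a : ℝ) (ha : 0 < a) :
    Integrable (fun x : R2 => Real.exp (-a * ‖x‖ ^ 2)) := by
  rw [← (eps_measurePreserving.symm eps).integrable_comp_emb eps.symm.measurableEmbedding]
  have : ((fun x : R2 => Real.exp (-a * ‖x‖ ^ 2)) ∘ eps.symm)
      = fun p : ℝ × ℝ => Real.exp (-a * p.1 ^ 2) * Real.exp (-a * p.2 ^ 2) := by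
    funext p
    simp only [Function.comp_apply]
    rw [norm_eps_symm, Real.sq_sqrt (by positivity), ← Real.exp_add]
    ring_nf
  rw [this, Measure.volume_eq_prod]
  exact (integrable_exp_neg_mul_sq ha).mul_prod (integrable_exp_neg_mul_sq ha)

lemma integrableOn_polar_bound (c β : ℝ) (hc : 0 < c) :
    IntegrableOn (fun p : ℝ × ℝ => p.1 * Real.exp (-c * p.1 ^ 2 + β * p.1))
      (Set.Ioi (0:ℝ) ×ˢ Set.Ioo (-Real.pi) Real.pi) volume := by
  rw [IntegrableOn, Measure.volume_eq_prod, ← Measure.prod_restrict]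
  have h1 : Integrable (fun r : ℝ => r * Real.exp (-c * r ^ 2 + β * r))
      (volume.restrict (Set.Ioi (0:ℝ))) := by
    · have hbig : Integrable (fun r : ℝ => Real.exp (β ^ 2 / (2 * c)) *
          (r * Real.exp (-(c/2) * r ^ 2))) volume :=
        ((integrable_mul_exp_neg_mul_sq (half_pos hc)).const_mul _)
      apply Integrable.mono' (hbig.restrict (s := Set.Ioi 0))
      · exact (Continuous.aestronglyMeasurable (by fun_prop))
      · filter_upwards [ae_restrict_mem measurableSet_Ioi] with r hr
        simp only [mem_Ioi] at hr
        rw [Real.norm_eq_abs, abs_of_nonneg (by positivity)]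
        rw [← mul_assoc, mul_comm (Real.exp _) r, mul_assoc, ← Real.exp_add]
        apply mul_le_mul_of_nonneg_left _ hr.le
        apply Real.exp_le_exp.2
        have hγ : (β ^ 2 / (2 * c)) * (2 * c) = β ^ 2 := by field_simp
        nlinarith [sq_nonneg (c * r - β), hc, hγ, sq_nonneg r]
  have key := h1.mul_prod (integrable_const (1:ℝ)
    (μ := volume.restrict (Set.Ioo (-Real.pi) Real.pi)))
  simpa using key

/-! ### The function `G` in center-of-mass coordinates -/

noncomputable def Gfun (μ₁ : ℝ) (z : R2 × R2) : ℝ :=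
  1 / Real.pi ^ 2 * (Real.exp (-((μ₁ ^ 2 + (1 - μ₁) ^ 2) * ‖z.1‖ ^ 2) - 2 * ‖z.2‖ ^ 2
      - (μ₁ - (1 - μ₁)) * ⟪z.1, z.2⟫) * I0 (|μ₁ - (1 - μ₁)| * (‖z.2‖ * ‖z.1‖)))

lemma continuous_Gfun (μ₁ : ℝ) : Continuous (Gfun μ₁) := by
  apply Continuous.mul continuous_const
  apply Continuous.mul
  · apply Real.continuous_exp.comp
    have : Continuous fun z : R2 × R2 => (⟪z.1, z.2⟫ : ℝ) := continuous_inner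
    fun_prop
  · exact continuous_I0.comp (by fun_prop)

lemma key_ineq (μ₁ a b : ℝ) (h0 : 0 ≤ μ₁) (h1 : μ₁ ≤ 1) (ha : 0 ≤ a) (hb : 0 ≤ b) :
    -((μ₁ ^ 2 + (1 - μ₁) ^ 2) * a ^ 2) - 2 * b ^ 2 + 2 * (|μ₁ - (1 - μ₁)| * (b * a))
      ≤ -(1/4) * a ^ 2 + -(1/4) * b ^ 2 := by
  have ht : |μ₁ - (1 - μ₁)| ^ 2 = (μ₁ - (1 - μ₁)) ^ 2 := sq_abs _
  nlinarith [sq_nonneg (7 * b - 4 * |μ₁ - (1 - μ₁)| * a), ht,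
    mul_nonneg (mul_nonneg h0 (sub_nonneg.2 h1)) (sq_nonneg a), abs_nonneg (μ₁ - (1 - μ₁)),
    mul_nonneg ha hb]

lemma Gfun_nonneg (μ₁ : ℝ) (z : R2 × R2) : 0 ≤ Gfun μ₁ z := by
  rw [Gfun]
  have := I0_nonneg (|μ₁ - (1 - μ₁)| * (‖z.2‖ * ‖z.1‖))
  positivity

lemma integrable_Gfun (μ₁ : ℝ) (h0 : 0 ≤ μ₁) (h1 : μ₁ ≤ 1) :
    Integrable (Gfun μ₁) (volume : Measure (R2 × R2)) := by
  have hb : Integrable (fun z : R2 × R2 => 1 / Real.pi ^ 2 *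
      (Real.exp (-(1/4) * ‖z.1‖ ^ 2) * Real.exp (-(1/4) * ‖z.2‖ ^ 2))) volume := by
    rw [Measure.volume_eq_prod]
    exact (((integrable_gauss (1/4) (by norm_num)).mul_prod
      (integrable_gauss (1/4) (by norm_num)))).const_mul _
  apply Integrable.mono' hb (continuous_Gfun μ₁).aestronglyMeasurable
  filter_upwards with z
  rw [Real.norm_eq_abs, abs_of_nonneg (Gfun_nonneg μ₁ z)]
  rw [Gfun]
  have hI : I0 (|μ₁ - (1 - μ₁)| * (‖z.2‖ * ‖z.1‖))
      ≤ Real.exp (|μ₁ - (1 - μ₁)| * (‖z.2‖ * ‖z.1‖)) :=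
    I0_le_exp _ (by positivity)
  have hinner : -((μ₁ - (1 - μ₁)) * ⟪z.1, z.2⟫) ≤ |μ₁ - (1 - μ₁)| * (‖z.2‖ * ‖z.1‖) := by
    calc -((μ₁ - (1 - μ₁)) * ⟪z.1, z.2⟫) ≤ |(μ₁ - (1 - μ₁)) * ⟪z.1, z.2⟫| := neg_le_abs _
      _ = |μ₁ - (1 - μ₁)| * |⟪z.1, z.2⟫| := abs_mul _ _
      _ ≤ |μ₁ - (1 - μ₁)| * (‖z.1‖ * ‖z.2‖) :=
          mul_le_mul_of_nonneg_left (abs_real_inner_le_norm _ _) (abs_nonneg _)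
      _ = |μ₁ - (1 - μ₁)| * (‖z.2‖ * ‖z.1‖) := by ring
  calc 1 / Real.pi ^ 2 * (Real.exp (-((μ₁ ^ 2 + (1 - μ₁) ^ 2) * ‖z.1‖ ^ 2) - 2 * ‖z.2‖ ^ 2
        - (μ₁ - (1 - μ₁)) * ⟪z.1, z.2⟫) * I0 (|μ₁ - (1 - μ₁)| * (‖z.2‖ * ‖z.1‖)))
      ≤ 1 / Real.pi ^ 2 * (Real.exp (-((μ₁ ^ 2 + (1 - μ₁) ^ 2) * ‖z.1‖ ^ 2) - 2 * ‖z.2‖ ^ 2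
        - (μ₁ - (1 - μ₁)) * ⟪z.1, z.2⟫) * Real.exp (|μ₁ - (1 - μ₁)| * (‖z.2‖ * ‖z.1‖))) := by
        apply mul_le_mul_of_nonneg_left _ (by positivity)
        exact mul_le_mul_of_nonneg_left hI (le_of_lt (Real.exp_pos _))
    _ ≤ 1 / Real.pi ^ 2 * (Real.exp (-(1/4) * ‖z.1‖ ^ 2) * Real.exp (-(1/4) * ‖z.2‖ ^ 2)) := by
        apply mul_le_mul_of_nonneg_left _ (by positivity)
        rw [← Real.exp_add, ← Real.exp_add]
        apply Real.exp_le_exp.2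
        have := key_ineq μ₁ ‖z.1‖ ‖z.2‖ h0 h1 (norm_nonneg _) (norm_nonneg _)
        nlinarith [hinner]
  
/-! ### the inner integral -/

noncomputable def Ffun (μ₁ : ℝ) (t : ℝ) : ℝ :=
  1 / Real.pi ^ 2 * Real.exp (-2 * t ^ 2) * ((2 * Real.pi) * ∫ s in Set.Ioi (0:ℝ),
    s * ((Real.exp (-((μ₁ ^ 2 + (1 - μ₁) ^ 2) * s ^ 2)) * I0 (|μ₁ - (1 - μ₁)| * (t * s))) *
      I0 ((|μ₁ - (1 - μ₁)| * t) * s)))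

lemma inner_integral_eq (μ₁ : ℝ) (h0 : 0 ≤ μ₁) (h1 : μ₁ ≤ 1) (q : R2) :
    ∫ Q : R2, Gfun μ₁ (Q, q) = Ffun μ₁ ‖q‖ := by
  set Δ := μ₁ - (1 - μ₁) with hΔ
  set c' := μ₁ ^ 2 + (1 - μ₁) ^ 2 with hc'
  have hc'half : (1:ℝ)/2 ≤ c' := by rw [hc']; nlinarith [sq_nonneg (2*μ₁ - 1)]
  set v : R2 := (-Δ) • q with hv
  set f : ℝ → ℝ := fun s => Real.exp (-(c' * s ^ 2)) * I0 (|Δ| * (‖q‖ * s)) with hf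
  have hnv : ‖v‖ = |Δ| * ‖q‖ := by
    rw [hv, norm_smul, Real.norm_eq_abs, abs_neg]
  have hpoint : ∀ Q : R2, Gfun μ₁ (Q, q)
      = (1 / Real.pi ^ 2 * Real.exp (-2 * ‖q‖ ^ 2)) * (f ‖Q‖ * Real.exp ⟪v, Q⟫) := by
    intro Q
    have hw : ⟪v, Q⟫ = -(Δ * ⟪Q, q⟫) := by
      rw [hv, real_inner_smul_left, real_inner_comm]
      ring
    rw [Gfun, hf]
    simp only
    rw [hw]
    rw [show -(c' * ‖Q‖ ^ 2) - 2 * ‖q‖ ^ 2 - Δ * ⟪Q, q⟫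
        = (-(c' * ‖Q‖ ^ 2)) + ((-2 * ‖q‖ ^ 2) + (-(Δ * ⟪Q, q⟫))) by ring]
    rw [Real.exp_add, Real.exp_add]
    ring
  rw [integral_congr_ae (Filter.Eventually.of_forall hpoint)]
  rw [MeasureTheory.integral_const_mul]
  have hint : IntegrableOn (fun p : ℝ × ℝ =>
      p.1 * (f p.1 * Real.exp ((v 0 * p.1) * Real.cos p.2 + (v 1 * p.1) * Real.sin p.2)))
      polarCoord.target := by
    rw [polarCoord_target]
    set β := |Δ| * ‖q‖ + (|v 0| + |v 1|) with hβ
    apply Integrable.mono' (integrableOn_polar_bound (1/2) β (by norm_num))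
    · apply Continuous.aestronglyMeasurable
      have hI := continuous_I0
      fun_prop
    · filter_upwards [ae_restrict_mem (measurableSet_Ioi.prod measurableSet_Ioo)] with p hp
      obtain ⟨hp1, hp2⟩ := hp
      simp only [mem_Ioi] at hp1
      have hf_nonneg : 0 ≤ f p.1 := by
        rw [hf]
        have := I0_nonneg (|Δ| * (‖q‖ * p.1))
        positivity
      rw [Real.norm_eq_abs, abs_of_nonneg (by positivity)]
      have hfle : f p.1 ≤ Real.exp (-(c' * p.1 ^ 2) + |Δ| * ‖q‖ * p.1) := by
        rw [hf, Real.exp_add]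
        apply mul_le_mul_of_nonneg_left _ (le_of_lt (Real.exp_pos _))
        calc I0 (|Δ| * (‖q‖ * p.1)) ≤ Real.exp (|Δ| * (‖q‖ * p.1)) :=
              I0_le_exp _ (by positivity)
          _ = Real.exp (|Δ| * ‖q‖ * p.1) := by ring_nf
      have hcossin : (v 0 * p.1) * Real.cos p.2 + (v 1 * p.1) * Real.sin p.2
          ≤ (|v 0| + |v 1|) * p.1 := by
        have c1 := abs_le.1 (abs_cos_le_one p.2)
        have s1 := abs_le.1 (abs_sin_le_one p.2)
        have hv0 : v 0 * p.1 * Real.cos p.2 ≤ |v 0| * p.1 := by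
          calc v 0 * p.1 * Real.cos p.2 ≤ |v 0 * p.1 * Real.cos p.2| := le_abs_self _
            _ = |v 0| * p.1 * |Real.cos p.2| := by
                rw [abs_mul, abs_mul, abs_of_nonneg hp1.le]
            _ ≤ |v 0| * p.1 * 1 := by
                apply mul_le_mul_of_nonneg_left (abs_cos_le_one p.2) (by positivity)
            _ = |v 0| * p.1 := by ring
        have hv1 : v 1 * p.1 * Real.sin p.2 ≤ |v 1| * p.1 := by
          calc v 1 * p.1 * Real.sin p.2 ≤ |v 1 * p.1 * Real.sin p.2| := le_abs_self _
            _ = |v 1| * p.1 * |Real.sin p.2| := by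
                rw [abs_mul, abs_mul, abs_of_nonneg hp1.le]
            _ ≤ |v 1| * p.1 * 1 := by
                apply mul_le_mul_of_nonneg_left (abs_sin_le_one p.2) (by positivity)
            _ = |v 1| * p.1 := by ring
        nlinarith
      calc p.1 * (f p.1 * Real.exp ((v 0 * p.1) * Real.cos p.2 + (v 1 * p.1) * Real.sin p.2))
          ≤ p.1 * (Real.exp (-(c' * p.1 ^ 2) + |Δ| * ‖q‖ * p.1)
              * Real.exp ((|v 0| + |v 1|) * p.1)) := by
            apply mul_le_mul_of_nonneg_left _ hp1.le
            apply mul_le_mul hfle (Real.exp_le_exp.2 hcossin) (le_of_lt (Real.exp_pos _))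
              (le_of_lt (Real.exp_pos _))
        _ ≤ p.1 * Real.exp (-(1/2) * p.1 ^ 2 + β * p.1) := by
            rw [← Real.exp_add]
            apply mul_le_mul_of_nonneg_left _ hp1.le
            apply Real.exp_le_exp.2
            rw [hβ]
            nlinarith [sq_nonneg p.1, hc'half, mul_le_mul_of_nonneg_right hc'half
              (sq_nonneg p.1)]
  rw [polar_int f v hint]
  rw [Ffun, hnv]


/-! ### Substituted form of the inner integral -/

noncomputable def PsiFun (μ₁ : ℝ) (l : ℝ) : ℝ :=
  1 / Real.pi ^ 2 * Real.exp (-2 * l) * ((2 * Real.pi) * ((1/2) * ∫ ρ in Set.Ioi (0:ℝ),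
    (Real.exp (-((μ₁ ^ 2 + (1 - μ₁) ^ 2) * ρ)) *
        I0 (|μ₁ - (1 - μ₁)| * (Real.sqrt l * Real.sqrt ρ))) *
      I0 ((|μ₁ - (1 - μ₁)| * Real.sqrt l) * Real.sqrt ρ)))

lemma Ffun_eq (μ₁ t : ℝ) (ht : 0 < t) : Ffun μ₁ t = PsiFun μ₁ (t ^ 2) := by
  rw [Ffun, PsiFun, Real.sqrt_sq ht.le]
  congr 2
  set φ : ℝ → ℝ := fun ρ => (Real.exp (-((μ₁ ^ 2 + (1 - μ₁) ^ 2) * ρ)) *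
      I0 (|μ₁ - (1 - μ₁)| * (t * Real.sqrt ρ))) * I0 ((|μ₁ - (1 - μ₁)| * t) * Real.sqrt ρ)
    with hφ
  have h : ∫ s in Set.Ioi (0:ℝ),
      s * ((Real.exp (-((μ₁ ^ 2 + (1 - μ₁) ^ 2) * s ^ 2)) *
          I0 (|μ₁ - (1 - μ₁)| * (t * s))) * I0 ((|μ₁ - (1 - μ₁)| * t) * s))
      = ∫ s in Set.Ioi (0:ℝ), s * φ (s ^ 2) := by
    apply setIntegral_congr_fun measurableSet_Ioi
    intro s hs
    simp only [mem_Ioi] at hs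
    simp only [hφ]
    rw [Real.sqrt_sq hs.le]
  rw [h, subst_sq]

lemma combine_aux (Ival p q r E : ℝ) (h : p + q + r = E) :
    (1 / Real.pi * Real.exp p * Ival) * ((1 / Real.sqrt Real.pi * Real.exp q) *
      (1 / Real.sqrt Real.pi * Real.exp r)) = 1 / Real.pi ^ 2 * (Real.exp E * Ival) := by
  rw [← h, Real.exp_add, Real.exp_add]
  have hpi : Real.sqrt Real.pi * Real.sqrt Real.pi = Real.pi :=
    Real.mul_self_sqrt Real.pi_pos.le
  rw [show Real.pi ^ 2 = Real.pi * (Real.sqrt Real.pi * Real.sqrt Real.pi) by rw [hpi]; ring]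
  have h1 : Real.sqrt Real.pi ≠ 0 := by positivity
  have h2 : Real.pi ≠ 0 := Real.pi_ne_zero
  field_simp

/-! ### Main theorem -/

/-- Equation (3.64)/(3.60): `∫∫ (Σψ_in)(q₁,q₂) ψ_in(q₁,q₂) dq₁ dq₂ = L(μ₁,μ₂)`. -/
theorem sigma_psi_integral_eq_L (μ₁ : ℝ) (hμ : μ₁ ∈ Set.Icc (0:ℝ) 1) :
    (∫ x : R2 × R2, SigmaPsi μ₁ x.1 x.2 * (psi x.1 * psi x.2)) = Lfun μ₁ (1 - μ₁) := by
  obtain ⟨h0, h1⟩ := hμ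
  have hpoint : ∀ z : R2 × R2,
      SigmaPsi μ₁ z.1 z.2 * (psi z.1 * psi z.2) = Gfun μ₁ (Tmeq μ₁ z) := by
    rintro ⟨q₁, q₂⟩
    have eQ : ‖q₁ + q₂‖ ^ 2 = ‖q₁‖ ^ 2 + 2 * ⟪q₁, q₂⟫ + ‖q₂‖ ^ 2 := norm_add_sq_real q₁ q₂
    have e2 : ‖(1 - μ₁) • q₁ - μ₁ • q₂‖ ^ 2
        = (1 - μ₁) ^ 2 * ‖q₁‖ ^ 2 - 2 * ((1 - μ₁) * μ₁ * ⟪q₁, q₂⟫) + μ₁ ^ 2 * ‖q₂‖ ^ 2 := by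
      rw [norm_sub_sq_real, real_inner_smul_left, real_inner_smul_right, norm_smul, norm_smul]
      simp [Real.norm_eq_abs, mul_pow, sq_abs]
      ring
    have e3 : ⟪q₁ + q₂, (1 - μ₁) • q₁ - μ₁ • q₂⟫
        = (1 - μ₁) * ‖q₁‖ ^ 2 - μ₁ * ‖q₂‖ ^ 2 + ((1 - μ₁) - μ₁) * ⟪q₁, q₂⟫ := by
      rw [inner_add_left, inner_sub_right, inner_sub_right, real_inner_smul_right,
        real_inner_smul_right, real_inner_smul_right, real_inner_smul_right,
        real_inner_self_eq_norm_sq, real_inner_self_eq_norm_sq, real_inner_comm q₂ q₁]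
      ring
    rw [sigmaPsi_eq, psi, psi, Tmeq_apply, Gfun]
    simp only
    apply combine_aux
    rw [eQ, e2, e3]
    ring
  calc ∫ x : R2 × R2, SigmaPsi μ₁ x.1 x.2 * (psi x.1 * psi x.2)
      = ∫ z : R2 × R2, Gfun μ₁ (Tmeq μ₁ z) :=
        integral_congr_ae (Filter.Eventually.of_forall hpoint)
    _ = ∫ w : R2 × R2, Gfun μ₁ w :=
        (Tmeq_measurePreserving μ₁).integral_comp (Tmeq μ₁).measurableEmbedding _
    _ = ∫ q : R2, ∫ Q : R2, Gfun μ₁ (Q, q) :=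
        integral_prod_symm _ (integrable_Gfun μ₁ h0 h1)
    _ = ∫ q : R2, Ffun μ₁ ‖q‖ :=
        integral_congr_ae (Filter.Eventually.of_forall fun q => inner_integral_eq μ₁ h0 h1 q)
    _ = (2 * Real.pi) * ∫ t in Set.Ioi (0:ℝ), t * Ffun μ₁ t := radial_int _
    _ = (2 * Real.pi) * ∫ t in Set.Ioi (0:ℝ), t * PsiFun μ₁ (t ^ 2) := by
        congr 1
        apply setIntegral_congr_fun measurableSet_Ioi
        intro t ht
        simp only [mem_Ioi] at ht
        show t * Ffun μ₁ t = t * PsiFun μ₁ (t ^ 2)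
        rw [Ffun_eq μ₁ t ht]
    _ = (2 * Real.pi) * ((1 / 2) * ∫ l in Set.Ioi (0:ℝ), PsiFun μ₁ l) := by
        rw [subst_sq]
    _ = Real.pi * ∫ l in Set.Ioi (0:ℝ), PsiFun μ₁ l := by ring
    _ = ∫ l in Set.Ioi (0:ℝ), Real.pi * PsiFun μ₁ l := (MeasureTheory.integral_const_mul _ _).symm
    _ = Lfun μ₁ (1 - μ₁) := by
        rw [Lfun]
        apply setIntegral_congr_fun measurableSet_Ioi
        intro l hl
        simp only [mem_Ioi] at hl
        show Real.pi * PsiFun μ₁ l = _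
        rw [PsiFun]
        have hπ : Real.pi ≠ 0 := Real.pi_ne_zero
        rw [show Real.pi * (1 / Real.pi ^ 2 * Real.exp (-2 * l) *
            ((2 * Real.pi) * ((1/2) * ∫ ρ in Set.Ioi (0:ℝ),
              (Real.exp (-((μ₁ ^ 2 + (1 - μ₁) ^ 2) * ρ)) *
                  I0 (|μ₁ - (1 - μ₁)| * (Real.sqrt l * Real.sqrt ρ))) *
                I0 ((|μ₁ - (1 - μ₁)| * Real.sqrt l) * Real.sqrt ρ))))
            = Real.exp (-2 * l) * ∫ ρ in Set.Ioi (0:ℝ),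
              (Real.exp (-((μ₁ ^ 2 + (1 - μ₁) ^ 2) * ρ)) *
                  I0 (|μ₁ - (1 - μ₁)| * (Real.sqrt l * Real.sqrt ρ))) *
                I0 ((|μ₁ - (1 - μ₁)| * Real.sqrt l) * Real.sqrt ρ) by
          field_simp]
        rw [← MeasureTheory.integral_const_mul]
        apply setIntegral_congr_fun measurableSet_Ioi
        intro ρ hρ
        simp only [mem_Ioi] at hρ
        show Real.exp (-2 * l) *
            (Real.exp (-((μ₁ ^ 2 + (1 - μ₁) ^ 2) * ρ)) *
              I0 (|μ₁ - (1 - μ₁)| * (Real.sqrt l * Real.sqrt ρ)) *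
              I0 (|μ₁ - (1 - μ₁)| * Real.sqrt l * Real.sqrt ρ)) = _
        rw [show |μ₁ - (1 - μ₁)| * (Real.sqrt l * Real.sqrt ρ)
            = |μ₁ - (1 - μ₁)| * Real.sqrt (l * ρ) by rw [Real.sqrt_mul hl.le]]
        rw [show (|μ₁ - (1 - μ₁)| * Real.sqrt l) * Real.sqrt ρ
            = |μ₁ - (1 - μ₁)| * Real.sqrt (l * ρ) by rw [Real.sqrt_mul hl.le]; ring]
        rw [show -((μ₁ ^ 2 + (1 - μ₁) ^ 2) * ρ) = -(μ₁ ^ 2 + (1 - μ₁) ^ 2) * ρ by ring]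
        ring
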